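/- Let H be a complex Hilbert space, let 0 < A ≤ B be real numbers, and let S : H → H be a self-adjoint bounded operator with A·Id ≤ S ≤ B·Id (in the ordering of self-adjoint operators). Then S is invertible, and for every real α, ‖(S − α·Id) S⁻¹ (S − α·Id)‖ ≤ max{ (A − α)²/A , (B − α)²/B }. -/

import Mathlib

local notation "⟪" x ", " y "⟫" => @inner ℂ _ _ x y

/-- If `S` is a self-adjoint bounded operator on a complex Hilbert space with
`A·Id ≤ S ≤ B·Id` for some reals `0 < A ≤ B`, then `S` is invertible and for every real `α`,
`‖(S − α·Id) S⁻¹ (S − α·Id)‖ ≤ max {(A − α)²/A, (B − α)²/B}`. -/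
theorem norm_conj_inv_le_max
    {H : Type*} [NormedAddCommGroup H] [InnerProductSpace ℂ H] [CompleteSpace H]
    (S : H →L[ℂ] H) (hS : IsSelfAdjoint S) (A B : ℝ) (hA : 0 < A) (hAB : A ≤ B)
    (hlow : ∀ x : H, A * ‖x‖ ^ 2 ≤ (⟪x, S x⟫).re)
    (hup : ∀ x : H, (⟪x, S x⟫).re ≤ B * ‖x‖ ^ 2) :
    ∃ Sinv : H →L[ℂ] H, S.comp Sinv = 1 ∧ Sinv.comp S = 1 ∧
      ∀ α : ℝ,
        ‖(S - (α : ℂ) • (1 : H →L[ℂ] H)).comp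
            (Sinv.comp (S - (α : ℂ) • (1 : H →L[ℂ] H)))‖ ≤
          max ((A - α) ^ 2 / A) ((B - α) ^ 2 / B) := by
  have halg : ∀ r : ℝ, algebraMap ℝ (H →L[ℂ] H) r = (r : ℂ) • 1 := by
    intro r
    rw [Algebra.algebraMap_eq_smul_one, Complex.coe_smul]
  have hselfc : ∀ (T : H →L[ℂ] H) (r : ℝ), IsSelfAdjoint T →
      IsSelfAdjoint (T - algebraMap ℝ (H →L[ℂ] H) r) := by
    intro T r hT
    refine hT.sub ?_
    rw [IsSelfAdjoint, halg, star_smul, star_one, Complex.star_def, Complex.conj_ofReal]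
  have hre : ∀ (r : ℝ) (x : H),
      ContinuousLinearMap.reApplyInnerSelf (S - algebraMap ℝ (H →L[ℂ] H) r) x
        = (⟪x, S x⟫).re - r * ‖x‖ ^ 2 := by
    intro r x
    rw [halg]
    have e : ⟪(S - (r : ℂ) • (1 : H →L[ℂ] H)) x, x⟫ = ⟪S x, x⟫ - (r : ℂ) * ⟪x, x⟫ := by
      rw [ContinuousLinearMap.sub_apply, ContinuousLinearMap.smul_apply,
        ContinuousLinearMap.one_apply, inner_sub_left, inner_smul_left, Complex.conj_ofReal]
    have him : (⟪x, x⟫).im = 0 := inner_self_im (𝕜 := ℂ) x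
    have hre2 : (⟪x, x⟫).re = ‖x‖ ^ 2 := inner_self_eq_norm_sq (𝕜 := ℂ) x
    rw [ContinuousLinearMap.reApplyInnerSelf, e, map_sub, inner_re_symm]
    simp [RCLike.re_to_complex, Complex.mul_re, Complex.ofReal_re, Complex.ofReal_im, him, hre2]
    left; rw [← Complex.ofReal_pow, Complex.ofReal_re]
  -- the spectrum of S is contained in [A, B]
  have hspec : spectrum ℝ S ⊆ Set.Icc A B := by
    intro t ht
    constructor
    · have hpos : (0 : H →L[ℂ] H) ≤ S - algebraMap ℝ (H →L[ℂ] H) A := by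
        rw [ContinuousLinearMap.nonneg_iff_isPositive]
        refine ⟨(hselfc S A hS).isSymmetric, fun x => ?_⟩
        rw [hre]
        linarith [hlow x]
      have hmem : t - A ∈ spectrum ℝ (S - algebraMap ℝ (H →L[ℂ] H) A) := by
        rw [← spectrum.sub_singleton_eq]
        exact Set.sub_mem_sub ht rfl
      linarith [spectrum_nonneg_of_nonneg hpos hmem]
    · have hpos : (0 : H →L[ℂ] H) ≤ algebraMap ℝ (H →L[ℂ] H) B - S := by
        rw [ContinuousLinearMap.nonneg_iff_isPositive]
        have hsa : IsSelfAdjoint (algebraMap ℝ (H →L[ℂ] H) B - S) := by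
          have := hselfc S B hS
          rw [← neg_sub] at this
          simpa using this.neg
        refine ⟨hsa.isSymmetric, fun x => ?_⟩
        have heq : ContinuousLinearMap.reApplyInnerSelf (algebraMap ℝ (H →L[ℂ] H) B - S) x
            = -(ContinuousLinearMap.reApplyInnerSelf (S - algebraMap ℝ (H →L[ℂ] H) B) x) := by
          simp only [ContinuousLinearMap.reApplyInnerSelf, ContinuousLinearMap.sub_apply]
          rw [show (algebraMap ℝ (H →L[ℂ] H) B) x - S x
              = -(S x - (algebraMap ℝ (H →L[ℂ] H) B) x) by rw [neg_sub],
            inner_neg_left, map_neg]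
        rw [heq, hre]
        simp only [neg_sub, sub_nonneg]
        linarith [hup x]
      have hmem : B - t ∈ spectrum ℝ (algebraMap ℝ (H →L[ℂ] H) B - S) := by
        rw [← spectrum.singleton_sub_eq]
        exact Set.sub_mem_sub rfl ht
      linarith [spectrum_nonneg_of_nonneg hpos hmem]
  have hpos_spec : ∀ t ∈ spectrum ℝ S, (0 : ℝ) < t := fun t ht => lt_of_lt_of_le hA (hspec ht).1
  have hne : ∀ t ∈ spectrum ℝ S, t ≠ 0 := fun t ht => ne_of_gt (hpos_spec t ht)
  have hcinv : ContinuousOn (fun t : ℝ => t⁻¹) (spectrum ℝ S) :=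
    ContinuousOn.inv₀ continuousOn_id hne
  have hSid : cfc (fun t : ℝ => t) S = S := cfc_id' ℝ S hS
  have hcid : ContinuousOn (fun t : ℝ => t) (spectrum ℝ S) := continuous_id.continuousOn
  refine ⟨cfc (fun t : ℝ => t⁻¹) S, ?_, ?_, ?_⟩
  · show S * cfc (fun t : ℝ => t⁻¹) S = 1
    have e := cfc_mul (fun t : ℝ => t) (fun t : ℝ => t⁻¹) S hcid hcinv
    rw [hSid] at e
    rw [← e, cfc_congr (g := fun _ => (1 : ℝ)) (fun t ht => mul_inv_cancel₀ (hne t ht)),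
      cfc_const 1 S hS, map_one]
  · show cfc (fun t : ℝ => t⁻¹) S * S = 1
    have e := cfc_mul (fun t : ℝ => t⁻¹) (fun t : ℝ => t) S hcinv hcid
    rw [hSid] at e
    rw [← e, cfc_congr (g := fun _ => (1 : ℝ)) (fun t ht => inv_mul_cancel₀ (hne t ht)),
      cfc_const 1 S hS, map_one]
  · intro α
    have hcsub : ContinuousOn (fun t : ℝ => t - α) (spectrum ℝ S) :=
      continuousOn_id.sub continuousOn_const
    have hsubα : S - (α : ℂ) • (1 : H →L[ℂ] H) = cfc (fun t : ℝ => t - α) S := by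
      rw [cfc_sub (fun t : ℝ => t) (fun _ : ℝ => α) S hcid continuousOn_const, hSid,
        cfc_const α S hS, halg]
    have key : (S - (α : ℂ) • (1 : H →L[ℂ] H)).comp
        ((cfc (fun t : ℝ => t⁻¹) S).comp (S - (α : ℂ) • (1 : H →L[ℂ] H)))
        = cfc (fun t : ℝ => (t - α) * (t⁻¹ * (t - α))) S := by
      show (S - (α : ℂ) • (1 : H →L[ℂ] H)) *
        ((cfc (fun t : ℝ => t⁻¹) S) * (S - (α : ℂ) • (1 : H →L[ℂ] H))) = _
      have e1 := cfc_mul (fun t : ℝ => t⁻¹) (fun t : ℝ => t - α) S hcinv hcsub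
      have e2 := cfc_mul (fun t : ℝ => t - α) (fun t : ℝ => t⁻¹ * (t - α)) S hcsub
        (hcinv.mul hcsub)
      rw [hsubα, ← e1, ← e2]
    rw [key]
    have hB0 : (0 : ℝ) < B := lt_of_lt_of_le hA hAB
    have hmaxpos : (0 : ℝ) ≤ max ((A - α) ^ 2 / A) ((B - α) ^ 2 / B) :=
      le_max_of_le_left (div_nonneg (sq_nonneg _) hA.le)
    refine norm_cfc_le hmaxpos fun t ht => ?_
    have htA : A ≤ t := (hspec ht).1
    have htB : t ≤ B := (hspec ht).2
    have ht0 : (0 : ℝ) < t := hpos_spec t ht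
    have hval : (t - α) * (t⁻¹ * (t - α)) = (t - α) ^ 2 / t := by
      field_simp
    rw [Real.norm_eq_abs, hval, abs_of_nonneg (div_nonneg (sq_nonneg _) ht0.le)]
    rcases le_total (α ^ 2) (A * B) with hcase | hcase
    · refine le_max_of_le_right ?_
      rw [div_le_div_iff₀ ht0 hB0]
      have h1 : 0 ≤ (B - t) * (B * t - α ^ 2) :=
        mul_nonneg (by linarith) (by nlinarith)
      nlinarith [h1]
    · refine le_max_of_le_left ?_
      rw [div_le_div_iff₀ ht0 hA]
      have h1 : 0 ≤ (t - A) * (α ^ 2 - A * t) :=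
        mul_nonneg (by linarith) (by nlinarith)
      nlinarith [h1]
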